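/- Let Ω = diag(ω₁, …, ωₙ) be a real diagonal matrix with ωᵢ > 0 and let B̃₂ ∈ ℝ^{n×m}. For α > 0 set Ã(α) = [[0, Ω], [−Ω, −αΩ]] ∈ ℝ^{2n×2n} and B̃ = [0; B̃₂] ∈ ℝ^{2n×m}. Then Ã(α) is stable for every α > 0, and the unique solution X(α) of the Lyapunov equation Ã(α)X + XÃ(α)ᵀ = −B̃B̃ᵀ converges to the zero matrix as α → ∞. -/

import Mathlib

open Matrix Filter

/-- A real square matrix is stable if every eigenvalue (as a complex matrix)
has negative real part. -/
def Matrix.IsStable {n : Type*} [Fintype n] [DecidableEq n] (A : Matrix n n ℝ) : Prop :=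
  ∀ z ∈ spectrum ℂ (A.map (Complex.ofReal · )), z.re < 0

/-- Unique solution of the per-entry 4×4 linear system coming from the Lyapunov
equation for the block matrix `[[0, Ω], [-Ω, -αΩ]]`. -/
lemma lyap_entries (p q α w a b c d : ℝ) (hp : 0 < p) (hq : 0 < q) (hα : 0 < α)
    (e1 : p * c + q * b = 0)
    (e2 : p * d - q * a - α * q * b = 0)
    (e3 : -(p * a) - α * (p * c) + q * d = 0)
    (e4 : -(p * b) - α * (p * d) - q * c - α * (q * d) = -w) :
    a = (p*q*w*α + 0)/((p+q)*(p*q*α^2+(q-p)^2)) ∧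
    b = (0*α + (p-q)*p*w)/((p+q)*(p*q*α^2+(q-p)^2)) ∧
    c = (0*α + (q-p)*q*w)/((p+q)*(p*q*α^2+(q-p)^2)) ∧
    d = (p*q*w*α + 0)/((p+q)*(p*q*α^2+(q-p)^2)) := by
  have hD : (0:ℝ) < (p+q)*(p*q*α^2+(q-p)^2) := by positivity
  have hd : d * ((p+q)*(p*q*α^2+(q-p)^2)) = p*q*w*α := by
    linear_combination (-(α*p*q))*e1 + (-(q-p)*p)*e2 + ((q-p)*q)*e3 + (-(α*q*p))*e4
  have hb' : α*q*(p+q)*b - (p-q)*(p+q)*d = 0 := by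
    linear_combination α*q*e1 - p*e2 + q*e3
  have hb : b * ((p+q)*(p*q*α^2+(q-p)^2)) = (p-q)*p*w := by
    have key : (α*q) * (b * ((p+q)*(p*q*α^2+(q-p)^2))) = (α*q) * ((p-q)*p*w) := by
      linear_combination (p*q*α^2+(q-p)^2)*hb' + (p-q)*hd
    exact mul_left_cancel₀ (by positivity) key
  have hc : c * ((p+q)*(p*q*α^2+(q-p)^2)) = (q-p)*q*w := by
    have key : p * (c * ((p+q)*(p*q*α^2+(q-p)^2))) = p * ((q-p)*q*w) := by
      linear_combination ((p+q)*(p*q*α^2+(q-p)^2))*e1 - q*hb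
    exact mul_left_cancel₀ hp.ne' key
  have ha : a * ((p+q)*(p*q*α^2+(q-p)^2)) = p*q*w*α := by
    have key : q * (a * ((p+q)*(p*q*α^2+(q-p)^2))) = q * (p*q*w*α) := by
      linear_combination (-((p+q)*(p*q*α^2+(q-p)^2)))*e2 + p*hd + (-(α*q))*hb
    exact mul_left_cancel₀ hq.ne' key
  refine ⟨?_, ?_, ?_, ?_⟩ <;> rw [eq_div_iff hD.ne']
  · linarith [ha]
  · linarith [hb]
  · linarith [hc]
  · linarith [hd]

/-- A rational function with numerator of degree ≤ 1 and denominator of degree 2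
(with positive leading coefficient) tends to zero at infinity. -/
lemma aux_tendsto (c e s k1 k2 : ℝ) (hs : 0 < s) (hk1 : 0 < k1) (hk2 : 0 ≤ k2) :
    Tendsto (fun α : ℝ => (c*α+e)/(s*(k1*α^2+k2))) atTop (nhds 0) := by
  apply squeeze_zero_norm' (a := fun α : ℝ => ((|c|+|e|)/(s*k1))/α)
  · filter_upwards [eventually_ge_atTop 1] with α hα
    have hα0 : (0:ℝ) < α := lt_of_lt_of_le one_pos hα
    have hD : 0 < s*(k1*α^2+k2) := by positivity
    rw [Real.norm_eq_abs, abs_div, abs_of_pos hD, div_le_div_iff₀ hD hα0]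
    have h1 : |c * α + e| ≤ (|c| + |e|) * α := by
      calc |c * α + e| ≤ |c * α| + |e| := abs_add_le _ _
        _ = |c| * α + |e| := by rw [abs_mul, abs_of_pos hα0]
        _ ≤ (|c| + |e|) * α := by nlinarith [abs_nonneg c, abs_nonneg e]
    have h2 : (|c|+|e|)*α^2 ≤ (|c|+|e|)/(s*k1) * (s*(k1*α^2+k2)) := by
      rw [div_mul_eq_mul_div, le_div_iff₀ (by positivity)]
      nlinarith [mul_nonneg (add_nonneg (abs_nonneg c) (abs_nonneg e)) (mul_nonneg hs.le hk2)]
    nlinarith [abs_nonneg (c*α+e)]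
  · exact tendsto_const_nhds.div_atTop tendsto_id

/-- Roots of `z² + aωz + ω² = 0` with `α, ω > 0` have negative real part. -/
lemma quad_root_re_neg (ω α : ℝ) (hω : 0 < ω) (hα : 0 < α) (z : ℂ)
    (h : z^2 + (↑(α*ω))*z + (↑ω)^2 = 0) : z.re < 0 := by
  have hre := congrArg Complex.re h
  have him := congrArg Complex.im h
  simp [Complex.add_re, Complex.add_im, Complex.mul_re, Complex.mul_im, pow_two] at hre him
  by_contra hcon
  push_neg at hcon
  have hαω : 0 < α * ω := mul_pos hα hω
  have h2 : z.im * (2 * z.re + α * ω) = 0 := by linarith [him]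
  rcases mul_eq_zero.mp h2 with hv | hv
  · rw [hv] at hre
    nlinarith [mul_pos hω hω, mul_nonneg hαω.le hcon, mul_self_nonneg z.re]
  · linarith

lemma stable_part (n : ℕ) (ω : Fin n → ℝ) (hω : ∀ i, 0 < ω i) (α : ℝ) (hα : 0 < α) :
    (Matrix.fromBlocks 0 (Matrix.diagonal ω) (-(Matrix.diagonal ω))
      (-(α • Matrix.diagonal ω)) : Matrix (Fin n ⊕ Fin n) (Fin n ⊕ Fin n) ℝ).IsStable := by
  intro z hz
  set M : Matrix (Fin n ⊕ Fin n) (Fin n ⊕ Fin n) ℂ :=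
    (Matrix.fromBlocks 0 (Matrix.diagonal ω) (-(Matrix.diagonal ω))
      (-(α • Matrix.diagonal ω))).map (Complex.ofReal ·) with hM
  rw [spectrum.mem_iff] at hz
  have hdet : ((algebraMap ℂ (Matrix (Fin n ⊕ Fin n) (Fin n ⊕ Fin n) ℂ)) z - M).det = 0 := by
    by_contra hne
    exact hz ((Matrix.isUnit_iff_isUnit_det _).mpr (isUnit_iff_ne_zero.mpr hne))
  obtain ⟨v, hv0, hv⟩ := (Matrix.exists_mulVec_eq_zero_iff).mpr hdet
  have hMv : M.mulVec v = z • v := by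
    have := hv
    rw [Matrix.sub_mulVec] at this
    have h1 : (algebraMap ℂ (Matrix (Fin n ⊕ Fin n) (Fin n ⊕ Fin n) ℂ) z).mulVec v = z • v := by
      rw [Algebra.algebraMap_eq_smul_one]
      simp [Matrix.smul_mulVec]
    rw [h1] at this
    exact (sub_eq_zero.mp this).symm
  -- coordinate equations
  have key : ∀ i : Fin n, (ω i : ℂ) * v (Sum.inr i) = z * v (Sum.inl i) ∧
      -(ω i : ℂ) * v (Sum.inl i) - (α : ℂ) * (ω i) * v (Sum.inr i) = z * v (Sum.inr i) := by
    intro i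
    have h1 := congrFun hMv (Sum.inl i)
    have h2 := congrFun hMv (Sum.inr i)
    simp [hM, Matrix.mulVec, dotProduct, Fintype.sum_sum_type,
      Matrix.diagonal_apply, ite_mul, apply_ite] at h1 h2
    exact ⟨h1, by linear_combination h2⟩
  obtain ⟨s, hs⟩ := Function.ne_iff.mp hv0
  have main : ∃ i : Fin n, v (Sum.inr i) ≠ 0 := by
    cases s with
    | inr i => exact ⟨i, hs⟩
    | inl i =>
      refine ⟨i, fun hy => hs ?_⟩
      have h2 := (key i).2
      have hx : (-(ω i : ℂ)) * v (Sum.inl i) = 0 := by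
        rw [hy] at h2; linear_combination h2
      rcases mul_eq_zero.mp hx with h | h
      · exact absurd h (neg_ne_zero.mpr (Complex.ofReal_ne_zero.mpr (hω i).ne'))
      · exact h
  obtain ⟨i, hy⟩ := main
  have h1 := (key i).1
  have h2 := (key i).2
  have hquad : (z^2 + (α:ℂ)*(ω i)*z + ((ω i : ℂ))^2) * v (Sum.inr i) = 0 := by
    linear_combination ((ω i : ℂ))*h1 - z*h2
  have hq0 : z^2 + (α:ℂ)*(ω i)*z + ((ω i : ℂ))^2 = 0 := by
    rcases mul_eq_zero.mp hquad with h | h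
    · exact h
    · exact absurd h hy
  exact quad_root_re_neg (ω i) α (hω i) hα z (by push_cast; linear_combination hq0)

theorem lyapunov_solution_tendsto_zero (n m : ℕ) (ω : Fin n → ℝ) (hω : ∀ i, 0 < ω i)
    (B₂ : Matrix (Fin n) (Fin m) ℝ) :
    let Atilde : ℝ → Matrix (Fin n ⊕ Fin n) (Fin n ⊕ Fin n) ℝ := fun α =>
      Matrix.fromBlocks 0 (Matrix.diagonal ω) (-(Matrix.diagonal ω))
        (-(α • Matrix.diagonal ω))
    let B : Matrix (Fin n ⊕ Fin n) (Fin m) ℝ := Matrix.fromRows 0 B₂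
    (∀ α : ℝ, 0 < α → (Atilde α).IsStable) ∧
    ∀ X : ℝ → Matrix (Fin n ⊕ Fin n) (Fin n ⊕ Fin n) ℝ,
      (∀ α : ℝ, 0 < α → Atilde α * X α + X α * (Atilde α)ᵀ = -(B * Bᵀ)) →
      Tendsto X atTop (nhds 0) := by
  intro Atilde B
  constructor
  · intro α hα
    exact stable_part n ω hω α hα
  · intro X hX
    have hent : ∀ i j : Fin n, ∀ α : ℝ, 0 < α →
        X α (Sum.inl i) (Sum.inl j) =
          ((ω i)*(ω j)*(∑ x, B₂ i x * B₂ j x)*α + 0) /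
            (((ω i)+(ω j))*((ω i)*(ω j)*α^2+((ω j)-(ω i))^2)) ∧
        X α (Sum.inl i) (Sum.inr j) =
          (0*α + ((ω i)-(ω j))*(ω i)*(∑ x, B₂ i x * B₂ j x)) /
            (((ω i)+(ω j))*((ω i)*(ω j)*α^2+((ω j)-(ω i))^2)) ∧
        X α (Sum.inr i) (Sum.inl j) =
          (0*α + ((ω j)-(ω i))*(ω j)*(∑ x, B₂ i x * B₂ j x)) /
            (((ω i)+(ω j))*((ω i)*(ω j)*α^2+((ω j)-(ω i))^2)) ∧
        X α (Sum.inr i) (Sum.inr j) =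
          ((ω i)*(ω j)*(∑ x, B₂ i x * B₂ j x)*α + 0) /
            (((ω i)+(ω j))*((ω i)*(ω j)*α^2+((ω j)-(ω i))^2)) := by
      intro i j α hα
      have h := hX α hα
      simp only [Atilde, B] at h
      have r1 := congrFun (congrFun h (Sum.inl i)) (Sum.inl j)
      have r2 := congrFun (congrFun h (Sum.inl i)) (Sum.inr j)
      have r3 := congrFun (congrFun h (Sum.inr i)) (Sum.inl j)
      have r4 := congrFun (congrFun h (Sum.inr i)) (Sum.inr j)
      simp [Matrix.add_apply, Matrix.mul_apply, Fintype.sum_sum_type,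
        Matrix.diagonal_apply, ite_mul, mul_ite] at r1 r2 r3 r4
      exact lyap_entries (ω i) (ω j) α (∑ x, B₂ i x * B₂ j x)
        (X α (Sum.inl i) (Sum.inl j)) (X α (Sum.inl i) (Sum.inr j))
        (X α (Sum.inr i) (Sum.inl j)) (X α (Sum.inr i) (Sum.inr j))
        (hω i) (hω j) hα
        (by linear_combination r1) (by linear_combination r2)
        (by linear_combination r3) (by linear_combination r4)
    apply tendsto_pi_nhds.mpr
    intro k
    rw [tendsto_pi_nhds]
    intro l
    have h0 : ((0 : Matrix (Fin n ⊕ Fin n) (Fin n ⊕ Fin n) ℝ) k) l = (0:ℝ) := rfl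
    rw [h0]
    cases k with
    | inl i =>
      cases l with
      | inl j =>
        apply Tendsto.congr' _ (aux_tendsto ((ω i)*(ω j)*(∑ x, B₂ i x * B₂ j x)) 0
          ((ω i)+(ω j)) ((ω i)*(ω j)) (((ω j)-(ω i))^2)
          (add_pos (hω i) (hω j)) (mul_pos (hω i) (hω j)) (sq_nonneg _))
        filter_upwards [eventually_gt_atTop 0] with α hα
        exact ((hent i j α hα).1).symm
      | inr j =>
        apply Tendsto.congr' _ (aux_tendsto 0 (((ω i)-(ω j))*(ω i)*(∑ x, B₂ i x * B₂ j x))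
          ((ω i)+(ω j)) ((ω i)*(ω j)) (((ω j)-(ω i))^2)
          (add_pos (hω i) (hω j)) (mul_pos (hω i) (hω j)) (sq_nonneg _))
        filter_upwards [eventually_gt_atTop 0] with α hα
        exact ((hent i j α hα).2.1).symm
    | inr i =>
      cases l with
      | inl j =>
        apply Tendsto.congr' _ (aux_tendsto 0 (((ω j)-(ω i))*(ω j)*(∑ x, B₂ i x * B₂ j x))
          ((ω i)+(ω j)) ((ω i)*(ω j)) (((ω j)-(ω i))^2)
          (add_pos (hω i) (hω j)) (mul_pos (hω i) (hω j)) (sq_nonneg _))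
        filter_upwards [eventually_gt_atTop 0] with α hα
        exact ((hent i j α hα).2.2.1).symm
      | inr j =>
        apply Tendsto.congr' _ (aux_tendsto ((ω i)*(ω j)*(∑ x, B₂ i x * B₂ j x)) 0
          ((ω i)+(ω j)) ((ω i)*(ω j)) (((ω j)-(ω i))^2)
          (add_pos (hω i) (hω j)) (mul_pos (hω i) (hω j)) (sq_nonneg _))
        filter_upwards [eventually_gt_atTop 0] with α hα
        exact ((hent i j α hα).2.2.2).symm
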